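/- Consider V × V* as a symplectic vector space with symplectic form ω((v,φ),(w,ψ)) = ψ(v) − φ(w), and similarly (V × V*) × (V × V*) with the product symplectic form and Lagrangian L = V* × V* (the second factors). Let A be the nilpotent Jordan block on V = F^n and for 0 ≤ i ≤ n let L_{ii} = (ker A^i) × (ker (A*)^{n−i}) × (ker A^i) × (ker (A*)^{n−i}). Let Z ⊆ L_{ii} be a linear subspace with dim Z < 2n = dim L_{ii}. Then Z is not weakly coisotropic in (V × V*)² with respect to L; in particular any weakly coisotropic subvariety of L_{ii} must equal L_{ii}. -/

import Mathlib

open Submodule Module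

namespace JordanKernels

variable (F : Type*) [Field F] (n : ℕ)

/-- `ker A^i` for the `n × n` nilpotent Jordan block `A`: vectors supported on the
first `i` coordinates. -/
def Kpow (i : ℕ) : Submodule F (Fin n → F) where
  carrier := {v | ∀ j : Fin n, i ≤ (j : ℕ) → v j = 0}
  add_mem' := by intro a b ha hb j hj; simp [ha j hj, hb j hj]
  zero_mem' := by intro j _; rfl
  smul_mem' := by intro c a ha j hj; simp [ha j hj]

/-- `ker (A*)^{n−i}`: covectors supported on the last `n − i` coordinates. -/
def Cpow (i : ℕ) : Submodule F (Fin n → F) where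
  carrier := {φ | ∀ j : Fin n, (j : ℕ) < i → φ j = 0}
  add_mem' := by intro a b ha hb j hj; simp [ha j hj, hb j hj]
  zero_mem' := by intro j _; rfl
  smul_mem' := by intro c a ha j hj; simp [ha j hj]

/-- `L_{ii} = (ker A^i) × (ker (A*)^{n−i}) × (ker A^i) × (ker (A*)^{n−i})`. -/
def Lii (i : ℕ) : Submodule F (((Fin n → F) × (Fin n → F)) × ((Fin n → F) × (Fin n → F))) :=
  ((Kpow F n i).prod (Cpow F n i)).prod ((Kpow F n i).prod (Cpow F n i))

/-- The Lagrangian `L = V* × V*` (the second factors) in `(V × V*) × (V × V*)`. -/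
def Lagr : Submodule F (((Fin n → F) × (Fin n → F)) × ((Fin n → F) × (Fin n → F))) :=
  ((⊥ : Submodule F (Fin n → F)).prod ⊤).prod ((⊥ : Submodule F (Fin n → F)).prod ⊤)

end JordanKernels

open JordanKernels

section Aux

variable {F : Type*} [Field F]

/-- Rank-nullity for the image of a submodule under a linear map. -/
lemma aux_finrank_map_add {M N : Type*} [AddCommGroup M] [Module F M]
    [AddCommGroup N] [Module F N] [FiniteDimensional F M]
    (f : M →ₗ[F] N) (S : Submodule F M) :
    finrank F (Submodule.map f S) + finrank F (S ⊓ LinearMap.ker f : Submodule F M)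
      = finrank F S := by
  have h1 : Submodule.map f S = LinearMap.range (f.domRestrict S) := by
    rw [LinearMap.range_domRestrict]
  have h2 : Submodule.map S.subtype (LinearMap.ker (f.domRestrict S))
      = S ⊓ LinearMap.ker f := by
    ext x
    constructor
    · rintro ⟨⟨y, hy⟩, hky, rfl⟩
      exact ⟨hy, by simpa [LinearMap.mem_ker] using hky⟩
    · rintro ⟨hxS, hxk⟩
      exact ⟨⟨x, hxS⟩, by simpa [LinearMap.mem_ker] using hxk, rfl⟩
  rw [h1, ← h2, Submodule.finrank_map_subtype_eq, LinearMap.finrank_range_add_finrank_ker]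

variable (F) (n : ℕ)

/-- The standard pairing on `V × V`, `V = F^n`. -/
def Bform : LinearMap.BilinForm F ((Fin n → F) × (Fin n → F)) :=
  LinearMap.mk₂ F (fun x y => (∑ j, x.1 j * y.1 j) + ∑ j, x.2 j * y.2 j)
    (by intro a b c; simp [add_mul, Finset.sum_add_distrib]; ring)
    (by intro a b c; simp [Finset.mul_sum, mul_add, mul_assoc, mul_left_comm])
    (by intro a b c; simp [mul_add, Finset.sum_add_distrib]; ring)
    (by intro a b c; simp [Finset.mul_sum, mul_add, mul_assoc, mul_left_comm])

lemma Bform_apply (x y : (Fin n → F) × (Fin n → F)) :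
    Bform F n x y = (∑ j, x.1 j * y.1 j) + ∑ j, x.2 j * y.2 j := rfl

lemma Bform_nondegenerate : (Bform F n).Nondegenerate := by
  refine (LinearMap.IsRefl.nondegenerate_iff_separatingLeft
    (by intro x y h; simpa [Bform_apply, mul_comm] using h)).2 ?_
  intro x hx
  have h1 : ∀ j : Fin n, x.1 j = 0 := by
    intro j
    have := hx (Pi.single j 1, 0)
    simpa [Bform_apply, Pi.single_apply, mul_ite, Finset.sum_ite_eq'] using this
  have h2 : ∀ j : Fin n, x.2 j = 0 := by
    intro j
    have := hx (0, Pi.single j 1)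
    simpa [Bform_apply, Pi.single_apply, mul_ite, Finset.sum_ite_eq'] using this
  ext j
  · exact h1 j
  · exact h2 j

lemma Bform_refl : (Bform F n).IsRefl := by
  intro x y h
  simpa [Bform_apply, mul_comm] using h

/-- Projection to the "position" components. -/
def Φmap : (((Fin n → F) × (Fin n → F)) × ((Fin n → F) × (Fin n → F))) →ₗ[F]
    ((Fin n → F) × (Fin n → F)) :=
  ((LinearMap.fst F (Fin n → F) (Fin n → F)).comp
    (LinearMap.fst F ((Fin n → F) × (Fin n → F)) ((Fin n → F) × (Fin n → F)))).prod
  ((LinearMap.fst F (Fin n → F) (Fin n → F)).comp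
    (LinearMap.snd F ((Fin n → F) × (Fin n → F)) ((Fin n → F) × (Fin n → F))))

/-- Projection to the "momentum" components. -/
def Gmap : (((Fin n → F) × (Fin n → F)) × ((Fin n → F) × (Fin n → F))) →ₗ[F]
    ((Fin n → F) × (Fin n → F)) :=
  ((LinearMap.snd F (Fin n → F) (Fin n → F)).comp
    (LinearMap.fst F ((Fin n → F) × (Fin n → F)) ((Fin n → F) × (Fin n → F)))).prod
  ((LinearMap.snd F (Fin n → F) (Fin n → F)).comp
    (LinearMap.snd F ((Fin n → F) × (Fin n → F)) ((Fin n → F) × (Fin n → F))))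

lemma Φmap_apply (w : ((Fin n → F) × (Fin n → F)) × ((Fin n → F) × (Fin n → F))) :
    Φmap F n w = (w.1.1, w.2.1) := rfl

lemma Gmap_apply (w : ((Fin n → F) × (Fin n → F)) × ((Fin n → F) × (Fin n → F))) :
    Gmap F n w = (w.1.2, w.2.2) := rfl

lemma ker_Φmap : LinearMap.ker (Φmap F n) = Lagr F n := by
  ext w
  simp [Φmap_apply, Lagr, Submodule.mem_prod, Prod.ext_iff, LinearMap.mem_ker]

lemma mem_Lagr_iff (w : ((Fin n → F) × (Fin n → F)) × ((Fin n → F) × (Fin n → F))) :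
    w ∈ Lagr F n ↔ w.1.1 = 0 ∧ w.2.1 = 0 := by
  simp [Lagr, Submodule.mem_prod]

end Aux

/-- Equip `(V × V*)²`, `V = F^n`, with the product of the symplectic forms
`ω((v,φ),(w,ψ)) = ψ(v) − φ(w)` and the Lagrangian `L = V* × V*`.  Any subspace
`Z ⊆ L_{ii}` with `dim Z < 2n` is not weakly coisotropic with respect to `L`; in
particular any weakly coisotropic subvariety of `L_{ii}` must be all of `L_{ii}`. -/
theorem small_subspace_of_Lii_not_weakly_coisotropic {F : Type*} [Field F]
    (n : ℕ) (hn : 0 < n) (i : ℕ) (hi : i ≤ n)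
    (Ω : LinearMap.BilinForm F (((Fin n → F) × (Fin n → F)) × ((Fin n → F) × (Fin n → F))))
    (hΩ : ∀ x y : ((Fin n → F) × (Fin n → F)) × ((Fin n → F) × (Fin n → F)),
      Ω x y = ((∑ j, y.1.2 j * x.1.1 j) - (∑ j, x.1.2 j * y.1.1 j))
        + ((∑ j, y.2.2 j * x.2.1 j) - (∑ j, x.2.2 j * y.2.1 j)))
    (Z : Submodule F (((Fin n → F) × (Fin n → F)) × ((Fin n → F) × (Fin n → F))))
    (hZ : Z ≤ Lii F n i) (hdim : Module.finrank F Z < 2 * n) :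
    ¬ (Submodule.map (Lagr F n).mkQ (Ω.orthogonal Z) ≤ Submodule.map (Lagr F n).mkQ Z) := by
  intro h
  -- notation
  set W := (((Fin n → F) × (Fin n → F)) × ((Fin n → F) × (Fin n → F)))
  have hWrank : finrank F W = 4 * n := by
    simp [W, Module.finrank_prod, Module.finrank_pi]
    ring
  have hVVrank : finrank F ((Fin n → F) × (Fin n → F)) = 2 * n := by
    simp [Module.finrank_prod, Module.finrank_pi]
    ring
  -- Ω is reflexive and nondegenerate
  have hrefl : Ω.IsRefl := by
    intro x y hxy
    rw [hΩ] at hxy ⊢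
    linear_combination -hxy
  have hnondeg : Ω.Nondegenerate := by
    refine (LinearMap.IsRefl.nondegenerate_iff_separatingLeft hrefl).2 ?_
    intro x hx
    have h11 : ∀ j : Fin n, x.1.1 j = 0 := fun j => by
      have := hx ((0, Pi.single j 1), 0)
      simpa [hΩ, Pi.single_apply, ite_mul, Finset.sum_ite_eq'] using this
    have h12 : ∀ j : Fin n, x.1.2 j = 0 := fun j => by
      have := hx ((Pi.single j 1, 0), 0)
      simpa [hΩ, Pi.single_apply, mul_ite, Finset.sum_ite_eq'] using this
    have h21 : ∀ j : Fin n, x.2.1 j = 0 := fun j => by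
      have := hx (0, (0, Pi.single j 1))
      simpa [hΩ, Pi.single_apply, ite_mul, Finset.sum_ite_eq'] using this
    have h22 : ∀ j : Fin n, x.2.2 j = 0 := fun j => by
      have := hx (0, (Pi.single j 1, 0))
      simpa [hΩ, Pi.single_apply, mul_ite, Finset.sum_ite_eq'] using this
    ext j
    exacts [h11 j, h12 j, h21 j, h22 j]
  -- dimension of the orthogonal of Z
  have hortho : finrank F (Ω.orthogonal Z) = 4 * n - finrank F Z := by
    rw [LinearMap.BilinForm.finrank_orthogonal hnondeg, hWrank]
  have hZle : finrank F Z ≤ 4 * n := hWrank ▸ Submodule.finrank_le Z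
  -- rank-nullity through the quotient map
  have hkerq : LinearMap.ker (Lagr F n).mkQ = Lagr F n := Submodule.ker_mkQ _
  have e1 : finrank F (Submodule.map (Lagr F n).mkQ (Ω.orthogonal Z))
      + finrank F ((Ω.orthogonal Z) ⊓ Lagr F n : Submodule F W) = finrank F (Ω.orthogonal Z) := by
    have := aux_finrank_map_add (Lagr F n).mkQ (Ω.orthogonal Z)
    rwa [hkerq] at this
  have e2 : finrank F (Submodule.map (Lagr F n).mkQ Z)
      + finrank F (Z ⊓ Lagr F n : Submodule F W) = finrank F Z := by
    have := aux_finrank_map_add (Lagr F n).mkQ Z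
    rwa [hkerq] at this
  have e3 : finrank F (Submodule.map (Φmap F n) Z)
      + finrank F (Z ⊓ Lagr F n : Submodule F W) = finrank F Z := by
    have := aux_finrank_map_add (Φmap F n) Z
    rwa [ker_Φmap] at this
  have e23 : finrank F (Submodule.map (Lagr F n).mkQ Z)
      = finrank F (Submodule.map (Φmap F n) Z) := by omega
  -- the momentum part of `Z^⊥ ∩ L` is orthogonal to the position part of `Z`
  have hGle : Submodule.map (Gmap F n) ((Ω.orthogonal Z) ⊓ Lagr F n)
      ≤ (Bform F n).orthogonal (Submodule.map (Φmap F n) Z) := by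
    rintro _ ⟨l, ⟨hlO, hlL⟩, rfl⟩
    rintro _ ⟨z, hzZ, rfl⟩
    have hOz : Ω z l = 0 := hlO z hzZ
    obtain ⟨hl1, hl2⟩ := (mem_Lagr_iff F n l).1 hlL
    rw [hΩ, hl1, hl2] at hOz
    simp only [Pi.zero_apply, mul_zero, Finset.sum_const_zero, sub_zero, zero_mul] at hOz
    show Bform F n (Φmap F n z) (Gmap F n l) = 0
    rw [Bform_apply, Φmap_apply, Gmap_apply]
    simp only []
    rw [← hOz]
    congr 1 <;> exact Finset.sum_congr rfl (fun j _ => mul_comm _ _)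
  -- `Gmap` is injective on the Lagrangian
  have hGker : ((Ω.orthogonal Z) ⊓ Lagr F n) ⊓ LinearMap.ker (Gmap F n) = ⊥ := by
    rw [eq_bot_iff]
    rintro w ⟨⟨-, hwL⟩, hwk⟩
    obtain ⟨hwL1, hwL2⟩ := (mem_Lagr_iff F n w).1 hwL
    have hwk' : (w.1.2, w.2.2) = (0 : (Fin n → F) × (Fin n → F)) := hwk
    rw [Prod.mk_eq_zero] at hwk'
    have : w = 0 := by
      ext j
      · exact congrFun hwL1 j
      · exact congrFun hwk'.1 j
      · exact congrFun hwL2 j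
      · exact congrFun hwk'.2 j
    simp [this]
  have e4 : finrank F (Submodule.map (Gmap F n) ((Ω.orthogonal Z) ⊓ Lagr F n))
      = finrank F ((Ω.orthogonal Z) ⊓ Lagr F n : Submodule F W) := by
    have := aux_finrank_map_add (Gmap F n) ((Ω.orthogonal Z) ⊓ Lagr F n)
    rw [hGker, finrank_bot, add_zero] at this
    exact this
  -- dimension count for the orthogonal wrt the standard pairing
  have e5 : finrank F ((Bform F n).orthogonal (Submodule.map (Φmap F n) Z))
      = 2 * n - finrank F (Submodule.map (Φmap F n) Z) := by
    rw [LinearMap.BilinForm.finrank_orthogonal (Bform_nondegenerate F n),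
      hVVrank]
  have hmle : finrank F (Submodule.map (Φmap F n) Z)
      ≤ 2 * n := hVVrank ▸ Submodule.finrank_le _
  -- assemble all inequalities
  have hmono : finrank F (Submodule.map (Lagr F n).mkQ (Ω.orthogonal Z))
      ≤ finrank F (Submodule.map (Lagr F n).mkQ Z) := Submodule.finrank_mono h
  have hkey : finrank F ((Ω.orthogonal Z) ⊓ Lagr F n : Submodule F W)
      ≤ 2 * n - finrank F (Submodule.map (Φmap F n) Z) := by
    rw [← e4, ← e5]
    exact Submodule.finrank_mono hGle
  omega
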